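/- Let X be a locally connected compact metric space, Y a metric space, and f: X → Y a continuous map. Then the quotient map π̄_f: X → |X|_f with respect to the connecting pseudometric is monotone (each fiber is connected), and the induced map f̄: |X|_f → Y (defined by f = f̄ ∘ π̄_f) is light (each fiber is totally disconnected). Thus f = f̄ ∘ π̄_f is a monotone-light factorization. -/

import Mathlib

open ENNReal Set

/-- The connecting pseudometric induced by `f : X → Y`:
`|x−y|_f = inf {diam f(K) : K ⊆ X connected, x ∈ K, y ∈ K}` (`∞` if no such `K`). -/
noncomputable def connDist {X Y : Type*} [TopologicalSpace X] [PseudoEMetricSpace Y]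
    (f : X → Y) (x y : X) : ℝ≥0∞ :=
  ⨅ K : {K : Set X // IsConnected K ∧ x ∈ K ∧ y ∈ K}, EMetric.diam (f '' K.1)

lemma exists_delta {ε : ℝ≥0∞} (hε : 0 < ε) : ∃ δ : ℝ≥0∞, 0 < δ ∧ δ + δ < ε := by
  rcases eq_or_ne ε ⊤ with rfl | hne
  · exact ⟨1, by norm_num, by norm_num⟩
  · refine ⟨ε / 2 / 2, ?_, ?_⟩
    · exact ENNReal.half_pos (by simpa using (ENNReal.half_pos hε.ne').ne')
    · rw [ENNReal.add_halves]
      exact ENNReal.half_lt_self hε.ne' hne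

lemma connDist_le {X Y : Type*} [TopologicalSpace X] [PseudoEMetricSpace Y]
    (f : X → Y) {K : Set X} {a b : X} (hK : IsConnected K) (ha : a ∈ K) (hb : b ∈ K) :
    connDist f a b ≤ EMetric.diam (f '' K) :=
  iInf_le (ι := {K : Set X // IsConnected K ∧ a ∈ K ∧ b ∈ K}) _ ⟨K, hK, ha, hb⟩

/-- Local smallness of the connecting pseudometric, from local connectedness. -/
lemma connDist_small {X Y : Type*} [TopologicalSpace X] [LocallyConnectedSpace X]
    [PseudoEMetricSpace Y] {f : X → Y} (hf : Continuous f) (a : X) {ε : ℝ≥0∞} (hε : 0 < ε) :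
    ∀ᶠ b in nhds a, connDist f a b < ε := by
  obtain ⟨δ, hδ0, hδε⟩ := exists_delta hε
  have h1 : f ⁻¹' Metric.eball (f a) δ ∈ nhds a :=
    hf.continuousAt (Metric.eball_mem_nhds _ hδ0)
  obtain ⟨N, ⟨hNo, haN, hNconn⟩, hNsub⟩ :=
    (LocallyConnectedSpace.open_connected_basis a).mem_iff.mp h1
  filter_upwards [hNo.mem_nhds haN] with b hb
  refine lt_of_le_of_lt (le_trans (connDist_le f hNconn haN hb) ?_) hδε
  refine EMetric.diam_le ?_
  rintro _ ⟨p, hp, rfl⟩ _ ⟨q, hq, rfl⟩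
  calc edist (f p) (f q) ≤ edist (f p) (f a) + edist (f a) (f q) := edist_triangle _ _ _
    _ ≤ δ + δ := by
        refine add_le_add ?_ ?_
        · exact le_of_lt (by simpa [Metric.mem_eball, edist_comm] using hNsub hp)
        · exact le_of_lt (by simpa [Metric.mem_eball, edist_comm] using hNsub hq)

/-- monotone–light factorization: for a continuous map `f` from a
locally connected compact metric space `X` to a metric space `Y`, the quotient
projection `π̄_f : X → |X|_f` is monotone (fibers are connected), and the induced
map `f̄ : |X|_f → Y` with `f = f̄ ∘ π̄_f` is light (fibers are totally
disconnected).  `|X|_f` is represented by any metric space `Z` together with a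
surjection `π` realizing the connecting pseudometric. -/
theorem monotone_light_factorization {X Y Z : Type*}
    [MetricSpace X] [CompactSpace X] [LocallyConnectedSpace X]
    [MetricSpace Y] [EMetricSpace Z]
    (f : X → Y) (hf : Continuous f)
    (π : X → Z) (hπ : Function.Surjective π)
    (hdist : ∀ x y : X, edist (π x) (π y) = connDist f x y) :
    (∀ z : Z, IsConnected (π ⁻¹' {z})) ∧
      ∀ g : Z → Y, (∀ x : X, g (π x) = f x) →
        ∀ y : Y, IsTotallyDisconnected (g ⁻¹' {y}) := by
  have hπcont : Continuous π := by
    rw [continuous_iff_continuousAt]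
    intro a
    rw [ContinuousAt, EMetric.tendsto_nhds]
    intro ε hε
    filter_upwards [connDist_small hf a hε] with b hb
    rw [edist_comm, hdist]; exact hb
  constructor
  · -- monotone: fibers connected
    intro z₀
    obtain ⟨x, hx⟩ := hπ z₀
    have hCclosed : IsClosed (π ⁻¹' {z₀}) := isClosed_singleton.preimage hπcont
    refine ⟨⟨x, hx⟩, ?_⟩
    rw [isPreconnected_iff_subset_of_fully_disjoint_closed hCclosed]
    intro u v hu hv hCuv huv
    by_contra hcon
    push_neg at hcon
    obtain ⟨a, haC, hau⟩ := Set.not_subset.mp hcon.1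
    obtain ⟨b, hbC, hbv⟩ := Set.not_subset.mp hcon.2
    have hav : a ∈ v := (hCuv haC).resolve_left hau
    have hbu : b ∈ u := (hCuv hbC).resolve_right hbv
    obtain ⟨U, V, hUo, hVo, huU, hvV, hUV⟩ := NormalSpace.normal u v hu hv huv
    have hedab : connDist f a b = 0 := by
      rw [← hdist, show π a = z₀ from haC, show π b = z₀ from hbC, edist_self]
    have key : ∀ n : ℕ, ∃ p : X, p ∉ U ∪ V ∧ edist (π p) (π a) < ((n : ℝ≥0∞))⁻¹ := by
      intro n
      have hpos : (0 : ℝ≥0∞) < ((n : ℝ≥0∞))⁻¹ :=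
        ENNReal.inv_pos.mpr (ENNReal.natCast_ne_top n)
      have hlt : connDist f a b < ((n : ℝ≥0∞))⁻¹ := by rw [hedab]; exact hpos
      obtain ⟨⟨K, hK, haK, hbK⟩, hKd⟩ := iInf_lt_iff.mp hlt
      have hKnot : ¬ K ⊆ U ∪ V := by
        intro hsub
        obtain ⟨w, _, hwU, hwV⟩ := hK.isPreconnected U V hUo hVo hsub
          ⟨b, hbK, huU hbu⟩ ⟨a, haK, hvV hav⟩
        exact Set.disjoint_left.mp hUV hwU hwV
      obtain ⟨p, hpK, hpUV⟩ := Set.not_subset.mp hKnot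
      refine ⟨p, hpUV, ?_⟩
      rw [hdist]
      exact lt_of_le_of_lt (connDist_le f hK hpK haK) hKd
    choose zs hzs1 hzs2 using key
    obtain ⟨zl, φ, hφ, hconv⟩ := CompactSpace.tendsto_subseq zs
    have hzlUV : zl ∉ U ∪ V := by
      have hcl : IsClosed ((U ∪ V)ᶜ) := (hUo.union hVo).isClosed_compl
      exact hcl.mem_of_tendsto hconv (Filter.Eventually.of_forall fun n => hzs1 (φ n))
    have T1 : Filter.Tendsto (fun n => edist (π zl) (π (zs (φ n)))) Filter.atTop (nhds 0) := by
      have h2 : Filter.Tendsto (fun n => π (zs (φ n))) Filter.atTop (nhds (π zl)) :=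
        (hπcont.tendsto zl).comp hconv
      simpa using (Filter.Tendsto.edist (tendsto_const_nhds (x := π zl)) h2)
    have T2 : Filter.Tendsto (fun n => edist (π (zs (φ n))) (π a)) Filter.atTop (nhds 0) := by
      refine tendsto_of_tendsto_of_tendsto_of_le_of_le tendsto_const_nhds
        (ENNReal.tendsto_inv_nat_nhds_zero.comp hφ.tendsto_atTop)
        (fun n => zero_le) (fun n => (hzs2 (φ n)).le)
    have hle : edist (π zl) (π a) ≤ 0 := by
      refine ge_of_tendsto (by simpa using T1.add T2)
        (Filter.Eventually.of_forall fun n => edist_triangle _ _ _)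
    have hzl : π zl = π a := edist_eq_zero.mp (le_antisymm hle zero_le)
    have : zl ∈ π ⁻¹' {z₀} := by
      simp only [Set.mem_preimage, Set.mem_singleton_iff, hzl]; exact haC
    exact hzlUV (Set.union_subset_union huU hvV (hCuv this))
  · -- light: fibers of g totally disconnected
    intro g hg y t hts ht z₁ hz₁ z₂ hz₂
    by_contra hne
    have hpos : 0 < edist z₁ z₂ := edist_pos.mpr hne
    obtain ⟨δ, hδ0, hδε⟩ := exists_delta hpos
    obtain ⟨x₁, hx₁⟩ := hπ z₁
    set A : Set Z := {z | z ∈ t ∧ ∃ x K, π x = z ∧ IsConnected K ∧ x₁ ∈ K ∧ x ∈ K ∧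
      ∀ p ∈ K, edist (f p) y < δ} with hA
    have step : ∀ z ∈ A, ∀ z' ∈ t, edist z z' < δ → z' ∈ A := by
      rintro z ⟨hzt, x, K, hxz, hK, hx₁K, hxK, hKball⟩ z' hz't hzz'
      obtain ⟨x', hx'⟩ := hπ z'
      have hlt : connDist f x x' < δ := by rw [← hdist, hxz, hx']; exact hzz'
      obtain ⟨⟨K', hK', hxK', hx'K'⟩, hKd⟩ := iInf_lt_iff.mp hlt
      refine ⟨hz't, x', K ∪ K', hx', IsConnected.union ⟨x, hxK, hxK'⟩ hK hK',
        Or.inl hx₁K, Or.inr hx'K', ?_⟩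
      rintro p (hp | hp)
      · exact hKball p hp
      · have hfx : f x = y := by
          rw [← hg x, hxz]; exact hts hzt
        calc edist (f p) y = edist (f p) (f x) := by rw [hfx]
          _ ≤ EMetric.diam (f '' K') :=
              EMetric.edist_le_diam_of_mem ⟨p, hp, rfl⟩ ⟨x, hxK', rfl⟩
          _ < δ := hKd
    have hz₁A : z₁ ∈ A := by
      refine ⟨hz₁, x₁, {x₁}, hx₁, isConnected_singleton, rfl, rfl, ?_⟩
      intro p hp
      rw [Set.mem_singleton_iff] at hp
      rw [hp]
      have hfx : f x₁ = y := by rw [← hg x₁, hx₁]; exact hts hz₁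
      rw [hfx, edist_self]; exact hδ0
    have hz₂A : z₂ ∈ A := by
      by_contra hz₂A
      have hsub : t ⊆ (⋃ z ∈ A, EMetric.ball z δ) ∪ ⋃ z ∈ t \ A, EMetric.ball z δ := by
        intro z hz
        by_cases hzA : z ∈ A
        · exact Or.inl (Set.mem_biUnion hzA (EMetric.mem_ball_self hδ0))
        · exact Or.inr (Set.mem_biUnion ⟨hz, hzA⟩ (EMetric.mem_ball_self hδ0))
      obtain ⟨w, hwt, hwU, hwV⟩ := ht (⋃ z ∈ A, EMetric.ball z δ)
        (⋃ z ∈ t \ A, EMetric.ball z δ)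
        (isOpen_biUnion fun _ _ => EMetric.isOpen_ball)
        (isOpen_biUnion fun _ _ => EMetric.isOpen_ball)
        hsub ⟨z₁, hz₁, Set.mem_biUnion hz₁A (EMetric.mem_ball_self hδ0)⟩
        ⟨z₂, hz₂, Set.mem_biUnion ⟨hz₂, hz₂A⟩ (EMetric.mem_ball_self hδ0)⟩
      obtain ⟨p, hpA, hwp⟩ := Set.mem_iUnion₂.mp hwU
      obtain ⟨q, hqA, hwq⟩ := Set.mem_iUnion₂.mp hwV
      have hwA : w ∈ A := step p hpA w hwt (by rwa [edist_comm, ← EMetric.mem_ball])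
      have : q ∈ A := step w hwA q hqA.1 (EMetric.mem_ball.mp hwq)
      exact hqA.2 this
    obtain ⟨_, x₂, K, hx₂, hK, hx₁K, hx₂K, hKb⟩ := hz₂A
    have hfinal : edist z₁ z₂ < edist z₁ z₂ := by
      calc edist z₁ z₂ = connDist f x₁ x₂ := by rw [← hx₁, ← hx₂, hdist]
        _ ≤ EMetric.diam (f '' K) := connDist_le f hK hx₁K hx₂K
        _ ≤ δ + δ := by
            refine EMetric.diam_le ?_
            rintro _ ⟨p, hp, rfl⟩ _ ⟨q, hq, rfl⟩
            calc edist (f p) (f q) ≤ edist (f p) y + edist y (f q) := edist_triangle _ _ _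
              _ ≤ δ + δ := add_le_add (hKb p hp).le
                  (by rw [edist_comm]; exact (hKb q hq).le)
        _ < edist z₁ z₂ := hδε
    exact lt_irrefl _ hfinal
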